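/- Square root lifting inequality: for any real a ≥ 1 and positive integers k, k' such that a·k' is an integer and k + a·k' ≤ p, the restricted orthogonality constants of an n×p matrix Φ satisfy θ_{k, a·k'}(Φ) ≤ √a · θ_{k,k'}(Φ). -/

import Mathlib

noncomputable def l2norm {p : ℕ} (c : Fin p → ℝ) : ℝ := Real.sqrt (∑ i, (c i)^2)

def IsSparse {p : ℕ} (k : ℕ) (c : Fin p → ℝ) : Prop :=
  (Finset.univ.filter (fun i => c i ≠ 0)).card ≤ k

/-- The restricted isometry constant `δ_k(Φ)`. -/
noncomputable def ripConst {n p : ℕ} (Φ : Matrix (Fin n) (Fin p) ℝ) (k : ℕ) : ℝ :=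
  sInf {δ : ℝ | 0 ≤ δ ∧ ∀ c : Fin p → ℝ, IsSparse k c →
    (1 - δ) * ∑ i, (c i)^2 ≤ (∑ i, (Φ.mulVec c i)^2) ∧
    (∑ i, (Φ.mulVec c i)^2) ≤ (1 + δ) * ∑ i, (c i)^2}

/-- The restricted orthogonality constant `θ_{k,k'}(Φ)`. -/
noncomputable def roConst {n p : ℕ} (Φ : Matrix (Fin n) (Fin p) ℝ) (k k' : ℕ) : ℝ :=
  sInf {θ : ℝ | 0 ≤ θ ∧ ∀ c c' : Fin p → ℝ, IsSparse k c → IsSparse k' c' →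
    (∀ i, c i = 0 ∨ c' i = 0) →
    |∑ i, (Φ.mulVec c i) * (Φ.mulVec c' i)| ≤ θ * l2norm c * l2norm c'}

lemma l2norm_nonneg {p : ℕ} (c : Fin p → ℝ) : 0 ≤ l2norm c := Real.sqrt_nonneg _

lemma l2norm_sq {p : ℕ} (c : Fin p → ℝ) : l2norm c ^ 2 = ∑ i, (c i)^2 :=
  Real.sq_sqrt (Finset.sum_nonneg fun _ _ => sq_nonneg _)

lemma abs_sum_mul_le {n : ℕ} (f g : Fin n → ℝ) :
    |∑ i, f i * g i| ≤ Real.sqrt (∑ i, (f i)^2) * Real.sqrt (∑ i, (g i)^2) := by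
  have h := Finset.sum_mul_sq_le_sq_mul_sq Finset.univ f g
  have h2 : |∑ i, f i * g i| = Real.sqrt ((∑ i, f i * g i)^2) := (Real.sqrt_sq_eq_abs _).symm
  rw [h2, ← Real.sqrt_mul (Finset.sum_nonneg fun _ _ => sq_nonneg _)]
  exact Real.sqrt_le_sqrt h

/-- The defining set of `roConst` is nonempty: a crude bound works. -/
lemma roSet_nonempty {n p : ℕ} (Φ : Matrix (Fin n) (Fin p) ℝ) (k k' : ℕ) :
    (∑ i, ∑ j, (Φ i j)^2) ∈ {θ : ℝ | 0 ≤ θ ∧ ∀ c c' : Fin p → ℝ, IsSparse k c → IsSparse k' c' →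
    (∀ i, c i = 0 ∨ c' i = 0) →
    |∑ i, (Φ.mulVec c i) * (Φ.mulVec c' i)| ≤ θ * l2norm c * l2norm c'} := by
  set θ₀ : ℝ := ∑ i, ∑ j, (Φ i j)^2 with hθ₀def
  have hθ₀ : 0 ≤ θ₀ := Finset.sum_nonneg fun _ _ => Finset.sum_nonneg fun _ _ => sq_nonneg _
  have hbound : ∀ c : Fin p → ℝ, Real.sqrt (∑ i, (Φ.mulVec c i)^2) ≤
      Real.sqrt θ₀ * l2norm c := by
    intro c
    rw [l2norm, ← Real.sqrt_mul hθ₀ (∑ i, (c i)^2)]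
    apply Real.sqrt_le_sqrt
    have h1 : ∀ i : Fin n, (Φ.mulVec c i)^2 ≤ (∑ j, (Φ i j)^2) * ∑ j, (c j)^2 := by
      intro i
      have := Finset.sum_mul_sq_le_sq_mul_sq Finset.univ (fun j => Φ i j) c
      simpa [Matrix.mulVec, dotProduct] using this
    calc ∑ i, (Φ.mulVec c i)^2 ≤ ∑ i, (∑ j, (Φ i j)^2) * ∑ j, (c j)^2 :=
          Finset.sum_le_sum fun i _ => h1 i
      _ = θ₀ * ∑ j, (c j)^2 := by rw [← Finset.sum_mul]
  refine ⟨hθ₀, fun c c' _ _ _ => ?_⟩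
  calc |∑ i, (Φ.mulVec c i) * (Φ.mulVec c' i)|
      ≤ Real.sqrt (∑ i, (Φ.mulVec c i)^2) * Real.sqrt (∑ i, (Φ.mulVec c' i)^2) :=
        abs_sum_mul_le _ _
    _ ≤ (Real.sqrt θ₀ * l2norm c) * (Real.sqrt θ₀ * l2norm c') := by
        exact mul_le_mul (hbound c) (hbound c') (Real.sqrt_nonneg _)
          (mul_nonneg (Real.sqrt_nonneg _) (l2norm_nonneg c))
    _ = θ₀ * l2norm c * l2norm c' := by
        rw [show (Real.sqrt θ₀ * l2norm c) * (Real.sqrt θ₀ * l2norm c')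
          = (Real.sqrt θ₀ * Real.sqrt θ₀) * l2norm c * l2norm c' by ring,
          Real.mul_self_sqrt hθ₀]

/-- `roConst` itself satisfies the defining properties. -/
lemma roConst_spec {n p : ℕ} (Φ : Matrix (Fin n) (Fin p) ℝ) (k k' : ℕ) :
    0 ≤ roConst Φ k k' ∧ ∀ c c' : Fin p → ℝ, IsSparse k c → IsSparse k' c' →
      (∀ i, c i = 0 ∨ c' i = 0) →
      |∑ i, (Φ.mulVec c i) * (Φ.mulVec c' i)| ≤ roConst Φ k k' * l2norm c * l2norm c' := by
  set M := {θ : ℝ | 0 ≤ θ ∧ ∀ c c' : Fin p → ℝ, IsSparse k c → IsSparse k' c' →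
    (∀ i, c i = 0 ∨ c' i = 0) →
    |∑ i, (Φ.mulVec c i) * (Φ.mulVec c' i)| ≤ θ * l2norm c * l2norm c'} with hMdef
  have hne : M.Nonempty := ⟨_, roSet_nonempty Φ k k'⟩
  have hroM : roConst Φ k k' = sInf M := rfl
  have h0 : 0 ≤ sInf M := le_csInf hne fun θ hθ => hθ.1
  rw [hroM]
  refine ⟨h0, fun c c' hc hc' hd => ?_⟩
  set K := l2norm c * l2norm c' with hKdef
  have hK : 0 ≤ K := mul_nonneg (l2norm_nonneg c) (l2norm_nonneg c')
  have hall : ∀ θ ∈ M, |∑ i, (Φ.mulVec c i) * (Φ.mulVec c' i)| ≤ θ * K := by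
    intro θ hθ
    have := hθ.2 c c' hc hc' hd
    rwa [mul_assoc] at this
  rw [mul_assoc, ← hKdef]
  rcases hK.eq_or_lt with hK0 | hKpos
  · obtain ⟨θ₀, hθ₀⟩ := hne
    have := hall θ₀ hθ₀
    rw [← hK0] at this ⊢
    simpa using this
  · rw [← div_le_iff₀ hKpos]
    exact le_csInf hne fun θ hθ => (div_le_iff₀ hKpos).2 (hall θ hθ)

lemma card_filter_mem_powersetCard {α : Type*} [DecidableEq α] (T : Finset α) {x : α}
    (hx : x ∈ T) (r : ℕ) :
    ((T.powersetCard (r+1)).filter (fun S => x ∈ S)).card = ((T.erase x).card).choose r := by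
  rw [← Finset.card_powersetCard]
  refine Finset.card_bij' (fun S _ => S.erase x) (fun S _ => insert x S) ?hi ?hj ?li ?ri
  case hi =>
    intro S hS
    rw [Finset.mem_filter, Finset.mem_powersetCard] at hS
    rw [Finset.mem_powersetCard]
    constructor
    · exact fun y hy => Finset.mem_erase.2
        ⟨(Finset.mem_erase.1 hy).1, hS.1.1 (Finset.mem_erase.1 hy).2⟩
    · rw [Finset.card_erase_of_mem hS.2, hS.1.2]
      omega
  case hj =>
    intro S hS
    rw [Finset.mem_powersetCard] at hS
    have hxS : x ∉ S := fun h => (Finset.mem_erase.1 (hS.1 h)).1 rfl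
    rw [Finset.mem_filter, Finset.mem_powersetCard]
    refine ⟨⟨?_, ?_⟩, Finset.mem_insert_self x S⟩
    · intro y hy
      rcases Finset.mem_insert.1 hy with rfl | hy
      · exact hx
      · exact Finset.erase_subset _ _ (hS.1 hy)
    · rw [Finset.card_insert_of_notMem hxS, hS.2]
  case li =>
    intro S hS
    rw [Finset.mem_filter] at hS
    exact Finset.insert_erase hS.2
  case ri =>
    intro S hS
    rw [Finset.mem_powersetCard] at hS
    have hxS : x ∉ S := fun h => (Finset.mem_erase.1 (hS.1 h)).1 rfl
    exact Finset.erase_insert hxS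

theorem square_root_lifting (n p k k' m : ℕ) (a : ℝ) (Φ : Matrix (Fin n) (Fin p) ℝ)
    (hk : 0 < k) (hk' : 0 < k') (ha : 1 ≤ a) (hm : (m : ℝ) = a * (k' : ℝ))
    (hp : k + m ≤ p) :
    roConst Φ k m ≤ Real.sqrt a * roConst Φ k k' := by
  obtain ⟨hθ0, hθ⟩ := roConst_spec Φ k k'
  set θ := roConst Φ k k' with hθdef
  have ha0 : (0:ℝ) ≤ a := le_trans zero_le_one ha
  -- k' ≤ m
  have hk'm : k' ≤ m := by
    have hkr : (0:ℝ) < (k':ℝ) := by exact_mod_cast hk'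
    have : (k':ℝ) ≤ (m:ℝ) := by rw [hm]; nlinarith
    exact_mod_cast this
  have hm1 : 1 ≤ m := by omega
  -- the counting constants
  set D : ℕ := (m-1).choose (k'-1) with hDdef
  set N : ℕ := m.choose k' with hNdef
  have hDpos : 0 < D := Nat.choose_pos (by omega)
  have hNatId : m * D = N * k' := by
    have h := Nat.add_one_mul_choose_eq (m-1) (k'-1)
    rwa [Nat.sub_add_cancel hm1, Nat.sub_add_cancel hk'] at h
  have hNa : (N:ℝ) = a * D := by
    have hk'0 : (k':ℝ) ≠ 0 := Nat.cast_ne_zero.2 hk'.ne'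
    have h1 : (m:ℝ) * D = N * k' := by exact_mod_cast hNatId
    apply mul_right_cancel₀ hk'0
    rw [← h1, hm]; ring
  -- show √a * θ is in the set defining roConst Φ k m
  have hbdd : BddBelow {θ : ℝ | 0 ≤ θ ∧ ∀ c c' : Fin p → ℝ, IsSparse k c → IsSparse m c' →
      (∀ i, c i = 0 ∨ c' i = 0) →
      |∑ i, (Φ.mulVec c i) * (Φ.mulVec c' i)| ≤ θ * l2norm c * l2norm c'} :=
    ⟨0, fun x hx => hx.1⟩
  refine csInf_le hbdd ⟨mul_nonneg (Real.sqrt_nonneg a) hθ0, ?_⟩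
  intro c c' hc hc' hdisj
  -- choose a superset T of the support of c' with card m
  obtain ⟨T, hTsub, hTcard⟩ : ∃ T : Finset (Fin p),
      (Finset.univ.filter (fun i => c' i ≠ 0)) ⊆ T ∧ T.card = m :=
    Finset.exists_superset_card_eq hc' (by simpa using le_trans (Nat.le_add_left m k) hp)
  set P := T.powersetCard k' with hPdef
  have hPcard : P.card = N := by rw [hPdef, Finset.card_powersetCard, hTcard]
  -- restriction of c' to S
  set res : Finset (Fin p) → Fin p → ℝ := fun S i => if i ∈ S then c' i else 0 with hresdef
  -- counting lemma specialized
  have hcount : ∀ (f : Fin p → ℝ), (∀ i, f i ≠ 0 → i ∈ T) →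
      ∀ i₀, ∑ S ∈ P, (if i₀ ∈ S then f i₀ else 0) = (D:ℝ) * f i₀ := by
    intro f hf i₀
    rw [← Finset.sum_filter, Finset.sum_const, nsmul_eq_mul]
    by_cases h : f i₀ = 0
    · rw [h, mul_zero, mul_zero]
    · have hi₀ : i₀ ∈ T := hf i₀ h
      congr 1
      have := card_filter_mem_powersetCard T hi₀ (k'-1)
      rw [Nat.sub_add_cancel hk'] at this
      rw [hPdef, this, Finset.card_erase_of_mem hi₀, hTcard]
  have hsupp : ∀ i, c' i ≠ 0 → i ∈ T := fun i hi => hTsub (by simp [hi])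
  -- linearity: D * ⟨Φc, Φc'⟩ = ∑_S ⟨Φc, Φ(res S)⟩
  have hlin : ∑ S ∈ P, ∑ i, (Φ.mulVec c i) * (Φ.mulVec (res S) i)
      = (D:ℝ) * ∑ i, (Φ.mulVec c i) * (Φ.mulVec c' i) := by
    rw [Finset.sum_comm, Finset.mul_sum]
    apply Finset.sum_congr rfl
    intro i _
    rw [← Finset.mul_sum]
    have : ∑ S ∈ P, Φ.mulVec (res S) i = (D:ℝ) * Φ.mulVec c' i := by
      simp only [Matrix.mulVec, dotProduct]
      rw [Finset.sum_comm, Finset.mul_sum]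
      apply Finset.sum_congr rfl
      intro j _
      have h1 : ∑ S ∈ P, Φ i j * res S j = Φ i j * ∑ S ∈ P, (if j ∈ S then c' j else 0) := by
        rw [Finset.mul_sum]
      rw [h1, hcount c' hsupp j]
      ring
    rw [this]; ring
  -- each res S is k'-sparse and disjoint from c
  have hterm : ∀ S ∈ P, |∑ i, (Φ.mulVec c i) * (Φ.mulVec (res S) i)|
      ≤ θ * l2norm c * l2norm (res S) := by
    intro S hS
    rw [hPdef, Finset.mem_powersetCard] at hS
    apply hθ c (res S) hc
    · unfold IsSparse
      calc (Finset.univ.filter (fun i => res S i ≠ 0)).card ≤ S.card := by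
            apply Finset.card_le_card
            intro i hi
            rw [Finset.mem_filter] at hi
            by_contra h
            exact hi.2 (by simp [hresdef, h])
        _ = k' := hS.2
    · intro i
      rcases hdisj i with h | h
      · exact Or.inl h
      · exact Or.inr (by simp [hresdef, h])
  -- sum of squared norms
  have hsq : ∑ S ∈ P, (l2norm (res S))^2 = (D:ℝ) * (l2norm c')^2 := by
    rw [l2norm_sq]
    calc ∑ S ∈ P, (l2norm (res S))^2 = ∑ S ∈ P, ∑ i, (res S i)^2 := by
          apply Finset.sum_congr rfl; intro S _; rw [l2norm_sq]
      _ = ∑ i, ∑ S ∈ P, (if i ∈ S then (c' i)^2 else 0) := by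
          rw [Finset.sum_comm]
          apply Finset.sum_congr rfl; intro i _
          apply Finset.sum_congr rfl; intro S _
          by_cases h : i ∈ S <;> simp [hresdef, h]
      _ = ∑ i, (D:ℝ) * (c' i)^2 := by
          apply Finset.sum_congr rfl; intro i _
          exact hcount (fun i => (c' i)^2) (fun i hi => hsupp i (fun h => hi (by simp [h]))) i
      _ = (D:ℝ) * ∑ i, (c' i)^2 := by rw [Finset.mul_sum]
  -- Cauchy-Schwarz over P
  have hCS : ∑ S ∈ P, l2norm (res S) ≤ Real.sqrt a * (D:ℝ) * l2norm c' := by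
    have h1 : (∑ S ∈ P, l2norm (res S))^2 ≤ (N:ℝ) * ∑ S ∈ P, (l2norm (res S))^2 := by
      have := sq_sum_le_card_mul_sum_sq (s := P) (f := fun S => l2norm (res S))
      rwa [hPcard] at this
    have h2 : (∑ S ∈ P, l2norm (res S))^2 ≤ (Real.sqrt a * (D:ℝ) * l2norm c')^2 := by
      calc (∑ S ∈ P, l2norm (res S))^2 ≤ (N:ℝ) * ((D:ℝ) * (l2norm c')^2) := by
            rw [← hsq]; exact h1
        _ = (Real.sqrt a * (D:ℝ) * l2norm c')^2 := by
            rw [hNa, mul_pow, mul_pow, Real.sq_sqrt ha0]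
            ring
    have hnn : 0 ≤ ∑ S ∈ P, l2norm (res S) :=
      Finset.sum_nonneg fun S _ => l2norm_nonneg _
    have hrhs : 0 ≤ Real.sqrt a * (D:ℝ) * l2norm c' :=
      mul_nonneg (mul_nonneg (Real.sqrt_nonneg a) (Nat.cast_nonneg D)) (l2norm_nonneg c')
    calc ∑ S ∈ P, l2norm (res S) = Real.sqrt ((∑ S ∈ P, l2norm (res S))^2) :=
          (Real.sqrt_sq hnn).symm
      _ ≤ Real.sqrt ((Real.sqrt a * (D:ℝ) * l2norm c')^2) := Real.sqrt_le_sqrt h2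
      _ = Real.sqrt a * (D:ℝ) * l2norm c' := Real.sqrt_sq hrhs
  -- put everything together
  have hDpos' : (0:ℝ) < (D:ℝ) := Nat.cast_pos.2 hDpos
  have hfinal : |∑ i, (Φ.mulVec c i) * (Φ.mulVec c' i)| * (D:ℝ)
      ≤ (Real.sqrt a * θ * l2norm c * l2norm c') * (D:ℝ) := by
    calc |∑ i, (Φ.mulVec c i) * (Φ.mulVec c' i)| * (D:ℝ)
        = |(D:ℝ) * ∑ i, (Φ.mulVec c i) * (Φ.mulVec c' i)| := by
          rw [abs_mul, abs_of_nonneg hDpos'.le, mul_comm]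
      _ = |∑ S ∈ P, ∑ i, (Φ.mulVec c i) * (Φ.mulVec (res S) i)| := by rw [hlin]
      _ ≤ ∑ S ∈ P, |∑ i, (Φ.mulVec c i) * (Φ.mulVec (res S) i)| :=
          Finset.abs_sum_le_sum_abs _ _
      _ ≤ ∑ S ∈ P, θ * l2norm c * l2norm (res S) := Finset.sum_le_sum hterm
      _ = θ * l2norm c * ∑ S ∈ P, l2norm (res S) := by rw [Finset.mul_sum]
      _ ≤ θ * l2norm c * (Real.sqrt a * (D:ℝ) * l2norm c') := by
          apply mul_le_mul_of_nonneg_left hCS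
          exact mul_nonneg hθ0 (l2norm_nonneg c)
      _ = (Real.sqrt a * θ * l2norm c * l2norm c') * (D:ℝ) := by ring
  exact le_of_mul_le_mul_right hfinal hDpos'
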